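/- Let n, m be natural numbers with m ≤ C(n,2), and let G be a graph with n vertices and m edges that maximizes the number of edges of the line graph among all graphs with n vertices and m edges. Then G is fully compressed; that is, the vertex set of G can be partitioned into a set K inducing a clique and an independent set I such that every vertex of I has all its neighbours in K and for all u, v ∈ I either N(u) ⊆ N(v) or N(v) ⊆ N(u). -/

import Mathlib

open SimpleGraph Finset

/-- The number of edges of the line graph of `G`. -/
noncomputable def eL {V : Type*} (G : SimpleGraph V) : ℕ :=
  Nat.card G.lineGraph.edgeSet

variable {n : ℕ}

lemma lineGraph_degree (G : SimpleGraph (Fin n)) {a b : Fin n} (hab : G.Adj a b) :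
    Nat.card (G.lineGraph.neighborSet ⟨s(a,b), hab⟩) + 2 =
      Nat.card (G.neighborSet a) + Nat.card (G.neighborSet b) := by
  classical
  have hinj : Function.Injective (Subtype.val : G.edgeSet → Sym2 (Fin n)) := Subtype.val_injective
  have himg : (Subtype.val '' (G.lineGraph.neighborSet ⟨s(a,b), hab⟩)) =
      (G.incidenceSet a ∪ G.incidenceSet b) \ {s(a,b)} := by
    ext f
    simp only [Set.mem_image, SimpleGraph.mem_neighborSet, lineGraph_adj_iff_exists,
      Set.mem_diff, Set.mem_union, Set.mem_singleton_iff, SimpleGraph.incidenceSet]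
    constructor
    · rintro ⟨⟨f, hf⟩, ⟨hne, v, hv1, hv2⟩, rfl⟩
      rw [Sym2.mem_iff] at hv1
      refine ⟨?_, fun h => hne (Subtype.ext h.symm)⟩
      rcases hv1 with rfl | rfl
      · exact Or.inl ⟨hf, hv2⟩
      · exact Or.inr ⟨hf, hv2⟩
    · rintro ⟨h1, h2⟩
      have hfE : f ∈ G.edgeSet := by rcases h1 with ⟨h, _⟩ | ⟨h, _⟩ <;> exact h
      refine ⟨⟨f, hfE⟩, ⟨?_, ?_⟩, rfl⟩
      · simpa [Subtype.ext_iff] using Ne.symm h2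
      · rcases h1 with ⟨_, h⟩ | ⟨_, h⟩
        · exact ⟨a, by simp, h⟩
        · exact ⟨b, by simp, h⟩
  have hcard : Nat.card (G.lineGraph.neighborSet ⟨s(a,b), hab⟩) =
      ((G.incidenceSet a ∪ G.incidenceSet b) \ {s(a,b)}).ncard := by
    rw [Nat.card_coe_set_eq, ← himg, Set.ncard_image_of_injective _ hinj]
  have hmem : s(a,b) ∈ G.incidenceSet a ∪ G.incidenceSet b :=
    Or.inl (G.mk'_mem_incidenceSet_left_iff.2 hab)
  have hfinU : (G.incidenceSet a ∪ G.incidenceSet b).Finite := Set.toFinite _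
  have h1 : ((G.incidenceSet a ∪ G.incidenceSet b) \ {s(a,b)}).ncard + 1 =
      (G.incidenceSet a ∪ G.incidenceSet b).ncard :=
    Set.ncard_diff_singleton_add_one hmem hfinU
  have h2 : (G.incidenceSet a ∪ G.incidenceSet b).ncard +
      ((G.incidenceSet a ∩ G.incidenceSet b)).ncard =
      (G.incidenceSet a).ncard + (G.incidenceSet b).ncard :=
    Set.ncard_union_add_ncard_inter _ _ (Set.toFinite _) (Set.toFinite _)
  have h3 : G.incidenceSet a ∩ G.incidenceSet b = {s(a,b)} :=
    G.incidenceSet_inter_incidenceSet_of_adj hab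
  have h4 : ∀ v : Fin n, (G.incidenceSet v).ncard = Nat.card (G.neighborSet v) := by
    intro v
    rw [Set.ncard_eq_toFinset_card', Set.toFinset_card, G.card_incidenceSet_eq_degree,
      Nat.card_eq_fintype_card, card_neighborSet_eq_degree]
  rw [h3, Set.ncard_singleton] at h2
  rw [hcard, ← h4, ← h4]
  omega

lemma key_identity (G : SimpleGraph (Fin n)) :
    2 * eL G + 2 * Nat.card G.edgeSet = ∑ v : Fin n, (Nat.card (G.neighborSet v))^2 := by
  classical
  -- handshake on the line graph
  have hL : ∑ e : G.edgeSet, G.lineGraph.degree e = 2 * G.lineGraph.edgeFinset.card :=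
    SimpleGraph.sum_degrees_eq_twice_card_edges _
  have heL : eL G = G.lineGraph.edgeFinset.card := by
    rw [eL, Nat.card_eq_fintype_card, SimpleGraph.edgeFinset_card]
  -- degree of an edge in the line graph, as a function on Sym2
  set f : Sym2 (Fin n) → ℕ := fun e =>
    Sym2.lift ⟨fun a b => Nat.card (G.neighborSet a) + Nat.card (G.neighborSet b),
      fun a b => by dsimp; omega⟩ e with hf
  have hdeg : ∀ e : G.edgeSet, G.lineGraph.degree e + 2 = f e.1 := by
    rintro ⟨e, he⟩
    induction e with
    | _ a b =>
      have hab : G.Adj a b := G.mem_edgeSet.1 he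
      have := lineGraph_degree G hab
      rw [hf]
      simp only [Sym2.lift_mk]
      rw [← this]
      congr 1
      rw [SimpleGraph.degree, SimpleGraph.neighborFinset, Set.toFinset_card,
        ← Nat.card_eq_fintype_card]
  have hsum : ∑ e : G.edgeSet, (G.lineGraph.degree e + 2) = ∑ e : G.edgeSet, f e.1 := by
    exact Finset.sum_congr rfl fun e _ => hdeg e
  have hcardE : Nat.card G.edgeSet = G.edgeFinset.card := by
    rw [Nat.card_eq_fintype_card, SimpleGraph.edgeFinset_card]
  have hleft : ∑ e : G.edgeSet, (G.lineGraph.degree e + 2) = 2 * eL G + 2 * Nat.card G.edgeSet := by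
    rw [Finset.sum_add_distrib, hL, heL, Finset.sum_const, hcardE, Finset.card_univ,
      smul_eq_mul, SimpleGraph.edgeFinset_card, mul_comm (Fintype.card _) 2, SimpleGraph.edgeFinset_card]
  -- now compute ∑ e : edgeSet, f e
  have hright : ∑ e : G.edgeSet, f e.1 = ∑ v : Fin n, (Nat.card (G.neighborSet v))^2 := by
    rw [Finset.sum_set_coe (f := f) G.edgeSet]
    have step1 : ∀ e ∈ G.edgeSet.toFinset, f e =
        ∑ v : Fin n, if v ∈ e then Nat.card (G.neighborSet v) else 0 := by
      intro e he
      rw [Set.mem_toFinset] at he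
      induction e with
      | _ a b =>
        have hne : a ≠ b := by
          intro h; exact G.not_isDiag_of_mem_edgeSet he (by simp [h])
        rw [hf]
        simp only [Sym2.lift_mk]
        rw [← Finset.sum_filter]
        have hfl : Finset.univ.filter (fun v => v ∈ s(a,b)) = {a, b} := by
          ext v; simp [Sym2.mem_iff]
        rw [hfl, Finset.sum_pair hne]
    have step2 : ∀ v : Fin n, ∑ e ∈ G.edgeSet.toFinset,
        (if v ∈ e then Nat.card (G.neighborSet v) else 0) = (Nat.card (G.neighborSet v))^2 := by
      intro v
      rw [← Finset.sum_filter, Finset.sum_const, smul_eq_mul]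
      have hfl : G.edgeSet.toFinset.filter (fun e => v ∈ e) = G.incidenceFinset v := by
        rw [G.incidenceFinset_eq_filter]
        ext e; simp only [Finset.mem_filter, Set.mem_toFinset, SimpleGraph.mem_edgeFinset]
      rw [hfl, G.card_incidenceFinset_eq_degree, ← card_neighborSet_eq_degree,
        ← Nat.card_eq_fintype_card]
      exact (sq _).symm
    calc ∑ e ∈ G.edgeSet.toFinset, f e
        = ∑ e ∈ G.edgeSet.toFinset, ∑ v : Fin n,
            (if v ∈ e then Nat.card (G.neighborSet v) else 0) := Finset.sum_congr rfl step1
      _ = ∑ v : Fin n, ∑ e ∈ G.edgeSet.toFinset,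
            (if v ∈ e then Nat.card (G.neighborSet v) else 0) := Finset.sum_comm
      _ = ∑ v : Fin n, (Nat.card (G.neighborSet v))^2 :=
          Finset.sum_congr rfl fun v _ => step2 v
  omega

/-- Shifting an edge from `v` to `u` (where `deg u ≥ deg v`) strictly increases `eL`. -/
lemma shift_lemma (G : SimpleGraph (Fin n)) {u v b : Fin n}
    (hvb : G.Adj v b) (hub : ¬ G.Adj u b) (hune : u ≠ b) (huv : u ≠ v)
    (hd : Nat.card (G.neighborSet v) ≤ Nat.card (G.neighborSet u)) :
    ∃ H : SimpleGraph (Fin n), Nat.card H.edgeSet = Nat.card G.edgeSet ∧ eL G < eL H := by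
  classical
  have hvnb : v ≠ b := G.ne_of_adj hvb
  set H : SimpleGraph (Fin n) :=
    { Adj := fun x y => (G.Adj x y ∧ s(x,y) ≠ s(v,b)) ∨ s(x,y) = s(u,b)
      symm := by
        constructor
        intro x y h
        rcases h with ⟨h1, h2⟩ | h
        · exact Or.inl ⟨h1.symm, by rwa [Sym2.eq_swap]⟩
        · exact Or.inr (by rwa [Sym2.eq_swap])
      loopless := by
        constructor
        intro x h
        rcases h with ⟨h1, _⟩ | h
        · exact G.loopless.irrefl x h1
        · rw [Sym2.eq_iff] at h
          rcases h with ⟨rfl, rfl⟩ | ⟨rfl, rfl⟩ <;> exact hune rfl } with hH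
  have hHadj : ∀ x y, H.Adj x y ↔ ((G.Adj x y ∧ s(x,y) ≠ s(v,b)) ∨ s(x,y) = s(u,b)) := by
    intro x y; rfl
  -- edge sets
  have hE : H.edgeSet = (G.edgeSet \ {s(v,b)}) ∪ {s(u,b)} := by
    ext e
    induction e with
    | _ x y =>
      rw [SimpleGraph.mem_edgeSet, hHadj]
      simp only [Set.mem_union, Set.mem_diff, Set.mem_singleton_iff, SimpleGraph.mem_edgeSet]
  have hEcard : Nat.card H.edgeSet = Nat.card G.edgeSet := by
    rw [hE, Nat.card_coe_set_eq, Nat.card_coe_set_eq]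
    rw [Set.union_singleton, Set.ncard_insert_of_notMem (by
      simp only [Set.mem_diff, Set.mem_singleton_iff, not_and]
      intro hmem
      exact absurd (G.mem_edgeSet.1 hmem) hub) (Set.Finite.diff (Set.toFinite _))]
    rw [Set.ncard_diff_singleton_add_one (G.mem_edgeSet.2 hvb) (Set.toFinite _)]
  -- neighbor sets
  have hNu : H.neighborSet u = insert b (G.neighborSet u) := by
    ext y
    simp only [SimpleGraph.mem_neighborSet, hHadj, Set.mem_insert_iff, Sym2.eq_iff]
    aesop
  have hNv : H.neighborSet v = G.neighborSet v \ {b} := by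
    ext y
    simp only [SimpleGraph.mem_neighborSet, hHadj, Set.mem_diff, Set.mem_singleton_iff,
      Sym2.eq_iff]
    have := hvb.ne'
    aesop
  have hNw : ∀ w, w ≠ u → w ≠ v → w ≠ b → H.neighborSet w = G.neighborSet w := by
    intro w hwu hwv hwb
    ext y
    simp only [SimpleGraph.mem_neighborSet, hHadj, Sym2.eq_iff]
    aesop
  have hNb : H.neighborSet b = insert u (G.neighborSet b \ {v}) := by
    ext y
    simp only [SimpleGraph.mem_neighborSet, hHadj, Set.mem_insert_iff, Set.mem_diff,
      Set.mem_singleton_iff, Sym2.eq_iff]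
    have h1 := hvb.ne'
    have h2 := hvb.symm
    aesop
  -- degree computations
  set dG : Fin n → ℕ := fun w => Nat.card (G.neighborSet w) with hdG
  set dH : Fin n → ℕ := fun w => Nat.card (H.neighborSet w) with hdH
  have hbu : b ≠ u := hune.symm
  have hcu : dH u = dG u + 1 := by
    rw [hdH, hdG]
    simp only
    rw [hNu, Nat.card_coe_set_eq, Nat.card_coe_set_eq]
    exact Set.ncard_insert_of_notMem (by exact hub) (Set.toFinite _)
  have hcv : dH v + 1 = dG v := by
    rw [hdH, hdG]
    simp only
    rw [hNv, Nat.card_coe_set_eq, Nat.card_coe_set_eq]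
    exact Set.ncard_diff_singleton_add_one (by exact hvb) (Set.toFinite _)
  have hcb : dH b = dG b := by
    rw [hdH, hdG]
    simp only
    rw [hNb, Nat.card_coe_set_eq, Nat.card_coe_set_eq]
    rw [Set.ncard_insert_of_notMem (by
        simp only [Set.mem_diff, Set.mem_singleton_iff, SimpleGraph.mem_neighborSet, not_and]
        intro h
        exact absurd h.symm hub) (Set.Finite.diff (Set.toFinite _))]
    rw [Set.ncard_diff_singleton_add_one (by exact hvb.symm) (Set.toFinite _)]
  have hall : ∀ w, w ≠ u → w ≠ v → dH w = dG w := by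
    intro w hwu hwv
    by_cases hwb : w = b
    · subst hwb; exact hcb
    · rw [hdH, hdG]; simp only; rw [hNw w hwu hwv hwb]
  -- sum inequality
  have hsplit : ∀ d : Fin n → ℕ,
      ∑ w : Fin n, (d w)^2 =
        (d u)^2 + ((d v)^2 + ∑ w ∈ (Finset.univ.erase u).erase v, (d w)^2) := by
    intro d
    rw [← Finset.add_sum_erase _ _ (Finset.mem_univ u),
      ← Finset.add_sum_erase _ _ (Finset.mem_erase.2 ⟨huv.symm, Finset.mem_univ v⟩)]
  have hrest : ∑ w ∈ (Finset.univ.erase u).erase v, (dH w)^2 =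
      ∑ w ∈ (Finset.univ.erase u).erase v, (dG w)^2 := by
    refine Finset.sum_congr rfl fun w hw => ?_
    rw [Finset.mem_erase, Finset.mem_erase] at hw
    rw [hall w hw.2.1 hw.1]
  have hlt : ∑ w : Fin n, (dG w)^2 < ∑ w : Fin n, (dH w)^2 := by
    rw [hsplit dG, hsplit dH, hrest, hcu]
    have h1 : dH v + 1 = dG v := hcv
    have h2 : dG v ≤ dG u := hd
    nlinarith [sq_nonneg (dG u), sq_nonneg (dH v)]
  have k1 : 2 * eL G + 2 * Nat.card G.edgeSet = ∑ w : Fin n, (dG w)^2 := key_identity G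
  have k2 : 2 * eL H + 2 * Nat.card H.edgeSet = ∑ w : Fin n, (dH w)^2 := key_identity H
  refine ⟨H, hEcard, ?_⟩
  omega


/-- A graph with `n` vertices and `m` edges which maximises the number of edges of the line
graph among all graphs with `n` vertices and `m` edges is fully compressed: its vertex set is
partitioned into a clique `K` and an independent set `I` all of whose neighbourhoods lie in `K`
and are nested. -/
theorem maximizer_of_lineGraph_edges_is_fully_compressed (n m : ℕ) (hm : m ≤ n * (n - 1) / 2)
    (G : SimpleGraph (Fin n)) (hG : Nat.card G.edgeSet = m)
    (hmax : ∀ H : SimpleGraph (Fin n), Nat.card H.edgeSet = m → eL H ≤ eL G) :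
    ∃ K I : Set (Fin n), K ∪ I = Set.univ ∧ K ∩ I = ∅ ∧
      G.IsClique K ∧
      (∀ u ∈ I, ∀ v ∈ I, ¬ G.Adj u v) ∧
      (∀ u ∈ I, G.neighborSet u ⊆ K) ∧
      (∀ u ∈ I, ∀ v ∈ I,
        G.neighborSet u ⊆ G.neighborSet v ∨ G.neighborSet v ⊆ G.neighborSet u) := by
  classical
  -- totality of the vicinal preorder
  have tot : ∀ x y : Fin n,
      (∀ a, G.Adj x a → a ≠ y → G.Adj y a) ∨ (∀ b, G.Adj y b → b ≠ x → G.Adj x b) := by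
    intro x y
    by_contra hc
    push_neg at hc
    obtain ⟨⟨a, hxa, hay, hya⟩, ⟨b, hyb, hbx, hxb⟩⟩ := hc
    have hxy : x ≠ y := by rintro rfl; exact hya hxa
    rcases le_total (Nat.card (G.neighborSet y)) (Nat.card (G.neighborSet x)) with h | h
    · obtain ⟨H, hHc, hlt⟩ := shift_lemma G hyb hxb (Ne.symm hbx) hxy h
      have := hmax H (by rw [hHc, hG])
      omega
    · obtain ⟨H, hHc, hlt⟩ := shift_lemma G hxa hya (Ne.symm hay) hxy.symm h
      have := hmax H (by rw [hHc, hG])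
      omega
  -- a maximum clique
  obtain ⟨K, hKmem, hKmax⟩ := Finset.exists_max_image
    ((Finset.univ : Finset (Finset (Fin n))).filter (fun s : Finset (Fin n) => G.IsClique (s : Set (Fin n))))
    (fun s : Finset (Fin n) => s.card) ⟨∅, by simp [SimpleGraph.isClique_empty]⟩
  have hK : G.IsClique (K : Set (Fin n)) := (Finset.mem_filter.1 hKmem).2
  have hKmax' : ∀ K' : Finset (Fin n), G.IsClique (K' : Set (Fin n)) → K'.card ≤ K.card := by
    intro K' h
    exact hKmax K' (Finset.mem_filter.2 ⟨Finset.mem_univ _, h⟩)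
  -- every vertex outside K has a non-neighbour in K
  have hext : ∀ w : Fin n, w ∉ K → ∃ x ∈ K, ¬ G.Adj w x := by
    intro w hw
    by_contra hcon
    push_neg at hcon
    have hcl : G.IsClique ((insert w K : Finset (Fin n)) : Set (Fin n)) := by
      rw [Finset.coe_insert]
      exact hK.insert (fun b hb _ => hcon b hb)
    have := hKmax' _ hcl
    rw [Finset.card_insert_of_notMem hw] at this
    omega
  -- independence of the complement
  have hindep : ∀ u v : Fin n, u ∉ K → v ∉ K → ¬ G.Adj u v := by
    intro u v hu hv hadj
    have huv : u ≠ v := G.ne_of_adj hadj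
    obtain ⟨x, hxK, hux⟩ := hext u hu
    obtain ⟨y, hyK, hvy⟩ := hext v hv
    by_cases hxy : x = y
    · subst hxy
      have hvKne : v ≠ x := fun h => hv (h ▸ hxK)
      have huKne : u ≠ x := fun h => hu (h ▸ hxK)
      have hA : ∀ b, G.Adj x b → b ≠ u → G.Adj u b := by
        rcases tot u x with h | h
        · exact absurd ((h v hadj hvKne).symm) hvy
        · exact h
      have hB : ∀ b, G.Adj x b → b ≠ v → G.Adj v b := by
        rcases tot v x with h | h
        · exact absurd ((h u hadj.symm huKne).symm) hux
        · exact h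
      -- build a bigger clique
      have hbase : G.IsClique ((K.erase x : Finset (Fin n)) : Set (Fin n)) :=
        hK.subset (by exact_mod_cast Finset.erase_subset x K)
      have hstep1 : G.IsClique (insert v ((K.erase x : Finset (Fin n)) : Set (Fin n))) := by
        refine hbase.insert (fun w hw _ => ?_)
        rw [Finset.mem_coe, Finset.mem_erase] at hw
        exact hB w (hK hxK hw.2 (Ne.symm hw.1)) (fun h => hv (h ▸ hw.2))
      have hstep2 : G.IsClique (insert u (insert v
          ((K.erase x : Finset (Fin n)) : Set (Fin n)))) := by
        refine hstep1.insert (fun w hw _ => ?_)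
        rcases Set.mem_insert_iff.1 hw with rfl | hw'
        · exact hadj
        · rw [Finset.mem_coe, Finset.mem_erase] at hw'
          exact hA w (hK hxK hw'.2 (Ne.symm hw'.1)) (fun h => hu (h ▸ hw'.2))
      have hcl : G.IsClique ((insert u (insert v (K.erase x)) : Finset (Fin n)) : Set (Fin n)) := by
        rw [Finset.coe_insert, Finset.coe_insert]
        exact hstep2
      have hle := hKmax' _ hcl
      have hvne : v ∉ K.erase x := fun h => hv (Finset.mem_of_mem_erase h)
      have hune : u ∉ insert v (K.erase x) := by
        rw [Finset.mem_insert]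
        rintro (rfl | h)
        · exact huv rfl
        · exact hu (Finset.mem_of_mem_erase h)
      rw [Finset.card_insert_of_notMem hune, Finset.card_insert_of_notMem hvne,
        Finset.card_erase_of_mem hxK] at hle
      have hKpos : 1 ≤ K.card := Finset.card_pos.2 ⟨x, hxK⟩
      omega
    · rcases tot x v with h | h
      · have hxyadj : G.Adj x y := hK hxK hyK hxy
        have hyv : y ≠ v := fun h => hv (h ▸ hyK)
        exact hvy (h y hxyadj hyv)
      · have hux' : u ≠ x := fun h => hu (h ▸ hxK)
        exact hux ((h u hadj.symm hux').symm)
  refine ⟨(K : Set (Fin n)), ((K : Set (Fin n)))ᶜ, Set.union_compl_self _, by simp, hK, ?_, ?_, ?_⟩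
  · intro u hu v hv
    exact hindep u v (by simpa using hu) (by simpa using hv)
  · intro u hu a ha
    by_contra haK
    exact hindep u a (by simpa using hu) (by simpa using haK) ha
  · intro u hu v hv
    by_cases huv : u = v
    · subst huv; exact Or.inl subset_rfl
    rcases tot u v with h | h
    · refine Or.inl fun a ha => ?_
      have hav : a ≠ v := by
        rintro rfl
        exact hindep u a (by simpa using hu) (by simpa using hv) ha
      exact h a ha hav
    · refine Or.inr fun a ha => ?_
      have hau : a ≠ u := by
        rintro rfl
        exact hindep a v (by simpa using hu) (by simpa using hv) ((show G.Adj v a from ha).symm)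
      exact h a ha hau
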